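/- Let q be a prime, k ≥ 1, and w : ZMod q → ℕ a map satisfying w(α) = 0 if and only if α = 0. Let C be a k-dimensional ZMod q-subspace of (Fin n → ZMod q), and let Δ ∈ ℕ be such that for every nonzero u ∈ C, the set { W(α·u) : α ∈ ZMod q, α ≠ 0 } has at most Δ elements. Then |W(C)|·(q − 1) ≤ (q^k − 1)·Δ. -/

import Mathlib

/-- The weight of a vector with respect to a coordinate-wise weight function. -/
def wtVec {q n : ℕ} (w : ZMod q → ℕ) (c : Fin n → ZMod q) : ℕ := ∑ i, w (c i)

/-- The weight set of a set of vectors. -/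
def wtSet {q n : ℕ} (w : ZMod q → ℕ) (C : Set (Fin n → ZMod q)) : Set ℕ :=
  {x | ∃ c ∈ C, c ≠ 0 ∧ wtVec w c = x}

theorem stmt5 (q n k : ℕ) (hq : q.Prime) (hk : 1 ≤ k)
    (w : ZMod q → ℕ) (hw0 : ∀ α : ZMod q, w α = 0 ↔ α = 0)
    (C : Submodule (ZMod q) (Fin n → ZMod q))
    (hdim : Module.finrank (ZMod q) C = k)
    (Δ : ℕ)
    (hΔ : ∀ u ∈ C, u ≠ 0 →
      {x | ∃ α : ZMod q, α ≠ 0 ∧ wtVec w (α • u) = x}.ncard ≤ Δ) :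
    (wtSet w (C : Set (Fin n → ZMod q))).ncard * (q - 1) ≤ (q ^ k - 1) * Δ := by
  classical
  haveI : Fact q.Prime := ⟨hq⟩
  -- the finset of nonzero codewords
  set S : Finset (Fin n → ZMod q) :=
    ((Set.toFinite (C : Set (Fin n → ZMod q))).toFinset).erase 0 with hS
  have hmemS : ∀ c, c ∈ S ↔ c ∈ C ∧ c ≠ 0 := by
    intro c
    rw [hS, Finset.mem_erase, Set.Finite.mem_toFinset, SetLike.mem_coe]
    tauto
  have hScard : S.card = q ^ k - 1 := by
    rw [hS, Finset.card_erase_of_mem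
      ((Set.Finite.mem_toFinset _).2 C.zero_mem)]
    congr 1
    rw [Set.Finite.card_toFinset]
    have h := Module.card_eq_pow_finrank (K := ZMod q) (V := C)
    rw [ZMod.card, hdim] at h
    rw [← h]
    exact Fintype.card_congr (Equiv.refl _)
  -- the weight set as a finset
  set WS : Finset ℕ := S.image (wtVec w) with hWS
  have hwtSet : wtSet w (C : Set (Fin n → ZMod q)) = ↑WS := by
    ext x
    constructor
    · rintro ⟨c, hc, hc0, rfl⟩
      exact Finset.mem_coe.2 (Finset.mem_image.2 ⟨c, (hmemS c).2 ⟨hc, hc0⟩, rfl⟩)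
    · intro hx
      obtain ⟨c, hc, rfl⟩ := Finset.mem_image.1 (Finset.mem_coe.1 hx)
      obtain ⟨h1, h2⟩ := (hmemS c).1 hc
      exact ⟨c, h1, h2, rfl⟩
  -- orbit weight sets
  set A : (Fin n → ZMod q) → Finset ℕ :=
    fun v => Finset.image (fun α : (ZMod q)ˣ => wtVec w ((α : ZMod q) • v))
      Finset.univ with hA
  have hmemAiff : ∀ v x, x ∈ A v ↔ ∃ α : (ZMod q)ˣ, wtVec w ((α : ZMod q) • v) = x := by
    intro v x
    rw [hA]
    constructor
    · intro h
      obtain ⟨α, -, hα⟩ := Finset.mem_image.1 h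
      exact ⟨α, hα⟩
    · rintro ⟨α, hα⟩
      exact Finset.mem_image.2 ⟨α, Finset.mem_univ _, hα⟩
  have hAcard : ∀ v ∈ S, (A v).card ≤ Δ := by
    intro v hv
    obtain ⟨hvC, hv0⟩ := (hmemS v).1 hv
    have h := hΔ v hvC hv0
    have heq : {x | ∃ α : ZMod q, α ≠ 0 ∧ wtVec w (α • v) = x} = ↑(A v) := by
      ext x
      rw [Finset.mem_coe, hmemAiff]
      constructor
      · rintro ⟨α, hα, rfl⟩
        exact ⟨Units.mk0 α hα, rfl⟩
      · rintro ⟨α, rfl⟩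
        exact ⟨(α : ZMod q), α.ne_zero, rfl⟩
    rw [heq, Set.ncard_coe_finset] at h
    exact h
  -- orbit invariance of A
  have hAinv : ∀ (v : Fin n → ZMod q) (α : (ZMod q)ˣ), A ((α : ZMod q) • v) = A v := by
    intro v α
    apply Finset.ext
    intro x
    rw [hmemAiff, hmemAiff]
    constructor
    · rintro ⟨β, rfl⟩
      exact ⟨β * α, by rw [Units.val_mul, mul_smul]⟩
    · rintro ⟨β, rfl⟩
      exact ⟨β * α⁻¹, by
        rw [smul_smul, ← Units.val_mul, mul_assoc, inv_mul_cancel, mul_one]⟩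
  -- membership of the weight in the orbit weight set
  have hmemA : ∀ v, wtVec w v ∈ A v := by
    intro v
    rw [hmemAiff]
    exact ⟨1, by rw [Units.val_one, one_smul]⟩
  -- choose a representative for each weight
  have hrep : ∀ x ∈ WS, ∃ c, c ∈ S ∧ wtVec w c = x := by
    intro x hx
    obtain ⟨c, hc, hcx⟩ := Finset.mem_image.1 hx
    exact ⟨c, hc, hcx⟩
  choose rep hrepS hrepW using hrep
  have hmemA3 : ∀ (x : ℕ) (h : x ∈ WS) (γ : (ZMod q)ˣ),
      x ∈ A ((γ : ZMod q) • rep x h) := by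
    intro x h γ
    rw [hAinv]
    have h' := hmemA (rep x h)
    rwa [hrepW x h] at h'
  -- the injection
  have key : (WS ×ˢ (Finset.univ : Finset (ZMod q)ˣ)).card ≤
      (S ×ˢ Finset.range Δ).card := by
    apply Finset.card_le_card_of_injOn
      (fun p => if h : p.1 ∈ WS then
        ((p.2 : ZMod q) • rep p.1 h,
          ((A ((p.2 : ZMod q) • rep p.1 h)).sort (· ≤ ·)).idxOf p.1)
        else (0, 0))
    · rintro ⟨x, α⟩ hp
      simp only [Finset.mem_coe, Finset.mem_product, Finset.mem_univ, and_true] at hp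
      simp only [hp, dif_pos]
      set c := rep x hp with hc
      have hcS := hrepS x hp
      have hcW := hrepW x hp
      obtain ⟨hcC, hc0⟩ := (hmemS c).1 hcS
      have hvS : (α : ZMod q) • c ∈ S := by
        rw [hmemS]
        refine ⟨C.smul_mem _ hcC, ?_⟩
        simp only [ne_eq, smul_eq_zero, not_or]
        exact ⟨α.ne_zero, hc0⟩
      refine Finset.mem_product.2 ⟨hvS, ?_⟩
      rw [Finset.mem_range]
      have hxmem : x ∈ A ((α : ZMod q) • c) := hmemA3 x hp α
      have hxl : x ∈ (A ((α : ZMod q) • c)).sort (· ≤ ·) := by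
        rwa [Finset.mem_sort]
      calc ((A ((α : ZMod q) • c)).sort (· ≤ ·)).idxOf x
          < ((A ((α : ZMod q) • c)).sort (· ≤ ·)).length :=
            List.idxOf_lt_length_iff.2 hxl
        _ = (A ((α : ZMod q) • c)).card := Finset.length_sort _
        _ ≤ Δ := hAcard _ hvS
    · rintro ⟨x, α⟩ hp ⟨y, β⟩ hq' heq
      simp only [Finset.mem_coe, Finset.mem_product, Finset.mem_univ, and_true] at hp hq'
      simp only [hp, hq', dif_pos, Prod.mk.injEq] at heq
      obtain ⟨h1, h2⟩ := heq
      have hxy : x = y := by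
        have hxmem : x ∈ A ((α : ZMod q) • rep x hp) := hmemA3 x hp α
        have hymem : y ∈ A ((α : ZMod q) • rep x hp) := by
          rw [h1]; exact hmemA3 y hq' β
        have hxl : x ∈ (A ((α : ZMod q) • rep x hp)).sort (· ≤ ·) := by
          rwa [Finset.mem_sort]
        have hyl : y ∈ (A ((α : ZMod q) • rep x hp)).sort (· ≤ ·) := by
          rwa [Finset.mem_sort]
        refine (List.idxOf_inj hxl).1 ?_
        rw [h2, h1]
      subst hxy
      have hc0 : rep x hp ≠ 0 := ((hmemS _).1 (hrepS x hp)).2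
      have hrr : rep x hp = rep x hq' := rfl
      have hαβ : α = β := by
        have hz : ((α : ZMod q) - (β : ZMod q)) • rep x hp = 0 := by
          rw [sub_smul, sub_eq_zero]
          rw [hrr] at h1 ⊢
          exact h1
        rcases smul_eq_zero.1 hz with h | h
        · exact Units.ext (sub_eq_zero.1 h)
        · exact absurd h hc0
      rw [hαβ]
  rw [Finset.card_product, Finset.card_product, Finset.card_range,
    Finset.card_univ, ZMod.card_units_eq_totient, Nat.totient_prime hq,
    hScard] at key
  rw [hwtSet, Set.ncard_coe_finset]
  exact key
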